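/- (Perturbed iterates stay close to the iterates of F.) Assume σ > 1, a > 0 and σe^{−a} > 1. Let F(x) = e^{−a}·σx/((σ−1)x+1) and, for an integer m ≥ 1, let H_m(x) = F(x) − 1/m. Then for every integer n ≥ 0 and every x ∈ [0,1] such that the iterates H_m^k(x) belong to [0,1] for all 0 ≤ k ≤ n, one has H_m^n(x) ≥ F^n(x) − (1/m)·(σe^{−a})^{n+1}/(σe^{−a} − 1), where F^n and H_m^n denote n-fold iterates. -/

import Mathlib

/-- The selection map `f(r) = σr/((σ−1)r+1)`. -/
noncomputable def fsel (σ r : ℝ) : ℝ := σ * r / ((σ - 1) * r + 1)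

/-- The map `F(r) = e^{−a}·f(r)`. -/
noncomputable def Fmap (σ a r : ℝ) : ℝ := Real.exp (-a) * fsel σ r

/-- The perturbed map `H_m(x) = F(x) − 1/m`. -/
noncomputable def Hmap (σ a : ℝ) (m : ℕ) (x : ℝ) : ℝ := Fmap σ a x - 1 / m

lemma Fmap_diff (σ a : ℝ) (hσ : 1 < σ) (u v : ℝ) (hv : 0 ≤ v) (hvu : v ≤ u) :
    0 ≤ Fmap σ a u - Fmap σ a v ∧
      Fmap σ a u - Fmap σ a v ≤ σ * Real.exp (-a) * (u - v) := by
  have hdu : (0:ℝ) < (σ - 1) * u + 1 := by nlinarith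
  have hdv : (0:ℝ) < (σ - 1) * v + 1 := by nlinarith
  have he : (0:ℝ) < Real.exp (-a) := Real.exp_pos _
  have key : Fmap σ a u - Fmap σ a v
      = (Real.exp (-a) * σ * (u - v)) / (((σ - 1) * u + 1) * ((σ - 1) * v + 1)) := by
    unfold Fmap fsel
    rw [mul_div_assoc', mul_div_assoc', div_sub_div _ _ hdu.ne' hdv.ne']
    congr 1
    ring
  have hnum : 0 ≤ Real.exp (-a) * σ * (u - v) :=
    mul_nonneg (mul_nonneg he.le (by linarith)) (by linarith)
  have h1 : (1:ℝ) ≤ (σ - 1) * u + 1 := by nlinarith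
  have h2 : (1:ℝ) ≤ (σ - 1) * v + 1 := by nlinarith
  have hden : (1:ℝ) ≤ ((σ - 1) * u + 1) * ((σ - 1) * v + 1) := by nlinarith [mul_le_mul h1 h2 zero_le_one (by linarith : (0:ℝ) ≤ (σ - 1) * u + 1)]
  constructor
  · rw [key]
    exact div_nonneg hnum (by linarith)
  · rw [key]
    calc (Real.exp (-a) * σ * (u - v)) / (((σ - 1) * u + 1) * ((σ - 1) * v + 1))
        ≤ Real.exp (-a) * σ * (u - v) := div_le_self hnum hden
      _ = σ * Real.exp (-a) * (u - v) := by ring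

lemma Fmap_mem (σ a : ℝ) (hσ : 1 < σ) (ha : 0 < a) {x : ℝ}
    (hx : x ∈ Set.Icc (0:ℝ) 1) : Fmap σ a x ∈ Set.Icc (0:ℝ) 1 := by
  obtain ⟨hx0, hx1⟩ := hx
  have hd : (0:ℝ) < (σ - 1) * x + 1 := by nlinarith
  have he : (0:ℝ) < Real.exp (-a) := Real.exp_pos _
  have he1 : Real.exp (-a) ≤ 1 := by
    rw [Real.exp_le_one_iff]; linarith
  constructor
  · unfold Fmap fsel; positivity
  · unfold Fmap fsel
    rw [mul_div_assoc'] at *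
    rw [div_le_one hd]
    nlinarith

lemma Fmap_iter_mem (σ a : ℝ) (hσ : 1 < σ) (ha : 0 < a) {x : ℝ}
    (hx : x ∈ Set.Icc (0:ℝ) 1) (n : ℕ) : (Fmap σ a)^[n] x ∈ Set.Icc (0:ℝ) 1 := by
  induction n with
  | zero => simpa using hx
  | succ n ih =>
      rw [Function.iterate_succ_apply']
      exact Fmap_mem σ a hσ ha ih

lemma key_bound (σ a : ℝ) (hσ : 1 < σ) (ha : 0 < a)
    (hcrit : 1 < σ * Real.exp (-a)) (m : ℕ) (hm : 1 ≤ m) (n : ℕ)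
    (x : ℝ) (hx : x ∈ Set.Icc (0 : ℝ) 1)
    (hiter : ∀ k ≤ n, (Hmap σ a m)^[k] x ∈ Set.Icc (0 : ℝ) 1) :
    (Hmap σ a m)^[n] x ≤ (Fmap σ a)^[n] x ∧
      (Fmap σ a)^[n] x - (Hmap σ a m)^[n] x
        ≤ (1 / m) * ((σ * Real.exp (-a)) ^ n - 1) / (σ * Real.exp (-a) - 1) := by
  set L := σ * Real.exp (-a) with hL
  have hL1 : 1 < L := hcrit
  have hm0 : (0:ℝ) < m := by exact_mod_cast hm
  induction n with
  | zero =>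
      simp only [Function.iterate_zero_apply]
      refine ⟨le_rfl, ?_⟩
      norm_num
  | succ n ih =>
      have hiter' : ∀ k ≤ n, (Hmap σ a m)^[k] x ∈ Set.Icc (0 : ℝ) 1 :=
        fun k hk => hiter k (Nat.le_succ_of_le hk)
      obtain ⟨ih1, ih2⟩ := ih hiter'
      have hHn : (Hmap σ a m)^[n] x ∈ Set.Icc (0:ℝ) 1 := hiter' n le_rfl
      obtain ⟨hd0, hd1⟩ := Fmap_diff σ a hσ ((Fmap σ a)^[n] x) ((Hmap σ a m)^[n] x)
        hHn.1 ih1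
      rw [← hL] at hd1
      rw [Function.iterate_succ_apply', Function.iterate_succ_apply']
      have hH : (Hmap σ a m) ((Hmap σ a m)^[n] x)
          = Fmap σ a ((Hmap σ a m)^[n] x) - 1 / m := rfl
      constructor
      · rw [hH]
        have h1m : (0:ℝ) ≤ 1 / m := by positivity
        linarith
      · rw [hH]
        have hLpos : (0:ℝ) < L - 1 := by linarith
        have hstep : L * ((1 / m) * (L ^ n - 1) / (L - 1)) + 1 / m
            = (1 / m) * (L ^ (n+1) - 1) / (L - 1) := by
          field_simp
          ring
        have hmul : L * ((Fmap σ a)^[n] x - (Hmap σ a m)^[n] x)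
            ≤ L * ((1 / m) * (L ^ n - 1) / (L - 1)) := by
          apply mul_le_mul_of_nonneg_left ih2 (by linarith)
        calc Fmap σ a ((Fmap σ a)^[n] x) - (Fmap σ a ((Hmap σ a m)^[n] x) - 1 / m)
            ≤ L * ((Fmap σ a)^[n] x - (Hmap σ a m)^[n] x) + 1 / m := by linarith
          _ ≤ L * ((1 / m) * (L ^ n - 1) / (L - 1)) + 1 / m := by linarith
          _ = (1 / m) * (L ^ (n+1) - 1) / (L - 1) := hstep

/-- Perturbed iterates stay close to the iterates of `F`:
`H_m^n(x) ≥ F^n(x) − (1/m)·(σe^{−a})^{n+1}/(σe^{−a} − 1)`. -/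
theorem Hmap_iterate_ge (σ a : ℝ) (hσ : 1 < σ) (ha : 0 < a)
    (hcrit : 1 < σ * Real.exp (-a)) (m : ℕ) (hm : 1 ≤ m) (n : ℕ)
    (x : ℝ) (hx : x ∈ Set.Icc (0 : ℝ) 1)
    (hiter : ∀ k ≤ n, (Hmap σ a m)^[k] x ∈ Set.Icc (0 : ℝ) 1) :
    (Fmap σ a)^[n] x - (1 / m) * (σ * Real.exp (-a)) ^ (n + 1) / (σ * Real.exp (-a) - 1)
      ≤ (Hmap σ a m)^[n] x := by
  obtain ⟨_, h2⟩ := key_bound σ a hσ ha hcrit m hm n x hx hiter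
  set L := σ * Real.exp (-a) with hL
  have hL1 : 1 < L := hcrit
  have hm0 : (0:ℝ) < m := by exact_mod_cast hm
  have hpow : L ^ n - 1 ≤ L ^ (n + 1) := by
    have : L ^ n ≤ L ^ (n + 1) := pow_le_pow_right₀ (by linarith) (Nat.le_succ n)
    linarith
  have hfrac : (1 / m) * (L ^ n - 1) / (L - 1) ≤ (1 / m) * L ^ (n + 1) / (L - 1) := by
    have h1 : (1/m : ℝ) * (L^n - 1) ≤ (1/m) * L^(n+1) :=
      mul_le_mul_of_nonneg_left hpow (by positivity)
    exact (div_le_div_iff_of_pos_right (by linarith)).mpr h1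
  linarith
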